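/- Polynomial lower bound (Theorem 1): for β non-central χ²-distributed with K degrees of freedom, noncentrality parameter M²/σ², define β⊥_poly = 2σ² (ε Γ(K/2 + 1))^{2/K} exp(M²/(Kσ²)). In the central case M² = 0, P(β ≤ β⊥_poly) ≤ ε for all ε ∈ (0, 1). -/

import Mathlib

open MeasureTheory ProbabilityTheory Real
open scoped NNReal ENNReal

lemma my_pi_mono {ι : Type*} [Fintype ι] {α : ι → Type*} [∀ i, MeasurableSpace (α i)]
    (μ ν : ∀ i, Measure (α i)) (h : ∀ i, μ i ≤ ν i) {s : Set (∀ i, α i)}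
    (hs : MeasurableSet s) : Measure.pi μ s ≤ Measure.pi ν s := by
  rw [Measure.pi_def, Measure.pi_def, toMeasure_apply _ _ hs, toMeasure_apply _ _ hs]
  refine (OuterMeasure.le_boundedBy.2 fun t => ?_) s
  refine (OuterMeasure.boundedBy_le t).trans ?_
  simp only [piPremeasure]
  exact Finset.prod_le_prod' fun i _ => Measure.le_iff'.1 (h i) _

lemma my_pi_smul {ι : Type*} [Fintype ι] (c : ℝ≥0) :
    (Measure.pi fun _ : ι => (c : ℝ≥0∞) • (volume : Measure ℝ)) =
      ((c : ℝ≥0∞) ^ Fintype.card ι) • Measure.pi fun _ : ι => (volume : Measure ℝ) := by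
  haveI : SigmaFinite ((c : ℝ≥0∞) • (volume : Measure ℝ)) := by
    rw [← ENNReal.smul_def]; infer_instance
  refine Measure.pi_eq fun s hs => ?_
  rw [Measure.smul_apply, Measure.pi_pi]
  simp only [Measure.smul_apply, smul_eq_mul]
  rw [Finset.prod_mul_distrib, Finset.prod_const, Finset.card_univ]

lemma my_gauss_le (σ2 : ℝ≥0) (hσ : 0 < σ2) :
    gaussianReal 0 σ2 ≤ ((((Real.sqrt (2 * π * σ2))⁻¹).toNNReal : ℝ≥0∞)) • (volume : Measure ℝ) := by
  rw [gaussianReal_of_var_ne_zero _ hσ.ne', ← withDensity_const]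
  refine withDensity_mono (Filter.Eventually.of_forall fun x => ?_)
  show ENNReal.ofReal (gaussianPDFReal 0 σ2 x) ≤ ((((Real.sqrt (2 * π * σ2))⁻¹).toNNReal : ℝ≥0∞))
  have h : ((((Real.sqrt (2 * π * σ2))⁻¹).toNNReal : ℝ≥0∞)) =
      ENNReal.ofReal ((Real.sqrt (2 * π * σ2))⁻¹) := rfl
  rw [h]
  refine ENNReal.ofReal_le_ofReal ?_
  rw [gaussianPDFReal]
  refine mul_le_of_le_one_right (by positivity) (Real.exp_le_one_iff.2 ?_)
  apply div_nonpos_of_nonpos_of_nonneg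
  · exact neg_nonpos.2 (sq_nonneg (x - 0))
  · positivity

theorem poly_lower_bound_central (K : ℕ) (hK : 1 ≤ K) (σ2 : ℝ≥0) (hσ : 0 < σ2)
    (ε : ℝ) (hε : ε ∈ Set.Ioo (0 : ℝ) 1) :
    ((Measure.pi fun _ : Fin K => gaussianReal 0 σ2)
        {x | ∑ k, (x k) ^ 2 ≤
          2 * (σ2 : ℝ) * (ε * Real.Gamma ((K : ℝ) / 2 + 1)) ^ (2 / (K : ℝ))}).toReal
      ≤ ε := by
  obtain ⟨hε0, hε1⟩ := hε
  haveI : Nonempty (Fin K) := ⟨⟨0, hK⟩⟩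
  have hs2 : (0 : ℝ) < σ2 := hσ
  have hπ : (0 : ℝ) < π := Real.pi_pos
  have hKR : (0 : ℝ) < K := by exact_mod_cast hK
  set G : ℝ := Real.Gamma ((K : ℝ) / 2 + 1) with hGdef
  have hGpos : 0 < G := Real.Gamma_pos_of_pos (by positivity)
  set B : ℝ := (ε * G) ^ (2 / (K : ℝ)) with hBdef
  have hBpos : 0 < B := Real.rpow_pos_of_pos (by positivity) _
  set t : ℝ := 2 * (σ2 : ℝ) * B with htdef
  have htpos : 0 < t := by positivity
  set S : Set (Fin K → ℝ) := {x | ∑ k, (x k) ^ 2 ≤ t} with hSdef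
  have hSm : MeasurableSet S := by
    apply measurableSet_le _ measurable_const
    exact Finset.measurable_sum _ fun i _ => (measurable_pi_apply i).pow_const 2
  set c : ℝ≥0 := ((Real.sqrt (2 * π * σ2))⁻¹).toNNReal with hcdef
  have hA : (0 : ℝ) < Real.sqrt (2 * π * σ2) := Real.sqrt_pos.2 (by positivity)
  -- step 1 : bound by uniform measure
  have h1 : (Measure.pi fun _ : Fin K => gaussianReal 0 σ2) S ≤
      (c : ℝ≥0∞) ^ K * (Measure.pi fun _ : Fin K => (volume : Measure ℝ)) S := by
    have := my_pi_mono (fun _ : Fin K => gaussianReal 0 σ2)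
      (fun _ : Fin K => (c : ℝ≥0∞) • (volume : Measure ℝ)) (fun _ => my_gauss_le σ2 hσ) hSm
    rwa [my_pi_smul, Measure.smul_apply, smul_eq_mul, Fintype.card_fin] at this
  -- step 2 : volume of the ball
  have hvol : (Measure.pi fun _ : Fin K => (volume : Measure ℝ)) S =
      ENNReal.ofReal (Real.sqrt t) ^ K * ENNReal.ofReal (Real.sqrt π ^ K / G) := by
    have hmp := EuclideanSpace.volume_preserving_symm_measurableEquiv_toLp (Fin K)
    rw [← volume_pi]
    rw [← hmp.measure_preimage hSm.nullMeasurableSet]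
    have hpre : (MeasurableEquiv.toLp 2 (Fin K → ℝ)).symm ⁻¹' S =
        Metric.closedBall (0 : EuclideanSpace ℝ (Fin K)) (Real.sqrt t) := by
      ext y
      simp only [Set.mem_preimage, Metric.mem_closedBall, dist_zero_right, hSdef,
        Set.mem_setOf_eq]
      have hnorm : ‖y‖ = Real.sqrt (∑ k, (y k) ^ 2) := by
        rw [EuclideanSpace.norm_eq]
        congr 1
        refine Finset.sum_congr rfl fun i _ => ?_
        rw [Real.norm_eq_abs, sq_abs]
      show (∑ k, (y k) ^ 2 ≤ t) ↔ ‖y‖ ≤ Real.sqrt t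
      rw [hnorm]
      constructor
      · exact fun h => Real.sqrt_le_sqrt h
      · intro h
        calc ∑ k, (y k) ^ 2 = Real.sqrt (∑ k, (y k) ^ 2) ^ 2 :=
              (Real.sq_sqrt (Finset.sum_nonneg fun i _ => sq_nonneg _)).symm
          _ ≤ Real.sqrt t ^ 2 := by
              exact pow_le_pow_left₀ (Real.sqrt_nonneg _) h 2
          _ = t := Real.sq_sqrt htpos.le
    rw [hpre, EuclideanSpace.volume_closedBall, Fintype.card_fin]
  -- step 3 : the real computation
  have key : Real.sqrt t * Real.sqrt π * (Real.sqrt (2 * π * σ2))⁻¹ = Real.sqrt B := by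
    have h2 : Real.sqrt t * Real.sqrt π = Real.sqrt (2 * π * σ2) * Real.sqrt B := by
      rw [← Real.sqrt_mul htpos.le, ← Real.sqrt_mul (by positivity)]
      congr 1
      rw [htdef]; ring
    rw [h2]
    field_simp
  have hsB : Real.sqrt B ^ K = ε * G := by
    rw [Real.sqrt_eq_rpow, ← Real.rpow_natCast (B ^ (1 / 2 : ℝ)) K,
      ← Real.rpow_mul hBpos.le, hBdef, ← Real.rpow_mul (by positivity : (0:ℝ) ≤ ε * G)]
    rw [show 2 / (K : ℝ) * (1 / 2 * K) = 1 by field_simp]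
    exact Real.rpow_one _
  have hreal : (Real.sqrt (2 * π * σ2))⁻¹ ^ K * (Real.sqrt t ^ K * (Real.sqrt π ^ K / G)) = ε := by
    have : (Real.sqrt (2 * π * σ2))⁻¹ ^ K * (Real.sqrt t ^ K * (Real.sqrt π ^ K / G)) =
        (Real.sqrt t * Real.sqrt π * (Real.sqrt (2 * π * σ2))⁻¹) ^ K / G := by ring
    rw [this, key, hsB]
    field_simp
  -- combine
  have hle : (Measure.pi fun _ : Fin K => gaussianReal 0 σ2) S ≤ ENNReal.ofReal ε := by
    refine h1.trans ?_
    rw [hvol]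
    have hc : (c : ℝ≥0∞) = ENNReal.ofReal ((Real.sqrt (2 * π * σ2))⁻¹) := rfl
    rw [hc, ← ENNReal.ofReal_pow (by positivity), ← ENNReal.ofReal_pow (Real.sqrt_nonneg t),
      ← ENNReal.ofReal_mul (by positivity), ← ENNReal.ofReal_mul (by positivity)]
    exact le_of_eq (congrArg ENNReal.ofReal hreal)
  calc ((Measure.pi fun _ : Fin K => gaussianReal 0 σ2) S).toReal
      ≤ (ENNReal.ofReal ε).toReal := ENNReal.toReal_mono ENNReal.ofReal_ne_top hle
    _ = ε := ENNReal.toReal_ofReal hε0.le
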